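/- (Continuous-treatment weight representation) Let Z be a real random variable with finite variance σ² > 0 and let Y = f(Z) for a bounded measurable f. Then E[(Z − E[Z]) f(Z)] = ∫ (E[f(Z) | Z ≥ z] − E[f(Z) | Z < z]) P(Z ≥ z) P(Z < z) dz, whenever both conditional expectations are well-defined for almost every z. -/

import Mathlib

open MeasureTheory

noncomputable def chi (a z : ℝ) : ℝ := if z ≤ a then 1 else 0

lemma chi_sub_eq {a b : ℝ} (h : b ≤ a) :
    (fun z => chi a z - chi b z) = (Set.Ioc b a).indicator (fun _ => (1:ℝ)) := by
  funext z
  by_cases h1 : z ≤ a <;> by_cases h2 : z ≤ b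
  · simp [chi, h1, h2, Set.indicator_apply, Set.mem_Ioc, not_lt.2 h2]
  · simp [chi, h1, h2, Set.indicator_apply, Set.mem_Ioc, not_le.1 h2]
  · exact (h1 (le_trans h2 h)).elim
  · simp [chi, h1, h2, Set.indicator_apply, Set.mem_Ioc]

lemma chi_sub_integrable_of_le {a b : ℝ} (h : b ≤ a) :
    Integrable (fun z => chi a z - chi b z) := by
  rw [chi_sub_eq h]
  exact (integrable_indicator_iff measurableSet_Ioc).2
    (integrableOn_const measure_Ioc_lt_top.ne)

lemma chi_sub_integrable (a b : ℝ) :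
    Integrable (fun z => chi a z - chi b z) := by
  rcases le_total b a with h | h
  · exact chi_sub_integrable_of_le h
  · have : (fun z => chi a z - chi b z) = fun z => -(chi b z - chi a z) := by
      funext z; ring
    rw [this]; exact (chi_sub_integrable_of_le h).neg

lemma integral_chi_sub_of_le {a b : ℝ} (h : b ≤ a) :
    ∫ z, (chi a z - chi b z) = a - b := by
  rw [chi_sub_eq h, integral_indicator_const (1:ℝ) measurableSet_Ioc]
  simp [Real.volume_Ioc, ENNReal.toReal_ofReal (sub_nonneg.2 h), h]

lemma integral_chi_sub (a b : ℝ) : ∫ z, (chi a z - chi b z) = a - b := by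
  rcases le_total b a with h | h
  · exact integral_chi_sub_of_le h
  · have : (fun z => chi a z - chi b z) = fun z => -(chi b z - chi a z) := by
      funext z; ring
    rw [this, integral_neg, integral_chi_sub_of_le h]; ring

lemma integral_abs_chi_sub (a b : ℝ) : ∫ z, |chi a z - chi b z| = |a - b| := by
  rcases le_total b a with h | h
  · have e : (fun z => |chi a z - chi b z|) = fun z => chi a z - chi b z := by
      funext z
      rw [abs_of_nonneg]
      rw [congrFun (chi_sub_eq h) z]
      exact Set.indicator_nonneg (fun _ _ => zero_le_one) z
    rw [e, integral_chi_sub_of_le h, abs_of_nonneg (sub_nonneg.2 h)]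
  · have e : (fun z => |chi a z - chi b z|) = fun z => chi b z - chi a z := by
      funext z
      rw [abs_sub_comm, abs_of_nonneg]
      rw [congrFun (chi_sub_eq h) z]
      exact Set.indicator_nonneg (fun _ _ => zero_le_one) z
    rw [e, integral_chi_sub_of_le h, abs_sub_comm]
    exact (abs_of_nonneg (sub_nonneg.2 h)).symm


/-- (Continuous-treatment weight representation) Let `Z` be a real random variable
with finite positive variance and let `Y = f(Z)` for a bounded measurable `f`.
Then `E[(Z - E[Z]) f(Z)] = ∫ (E[f(Z) | Z ≥ z] - E[f(Z) | Z < z]) P(Z ≥ z) P(Z < z) dz`,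
where the conditional expectations are the ratios of restricted integrals to the
probabilities of the conditioning events. -/
theorem stmt19 {Ω : Type*} [MeasurableSpace Ω] (μ : Measure Ω) [IsProbabilityMeasure μ]
    (Z : Ω → ℝ) (hZmeas : Measurable Z) (hZ2 : MeasureTheory.MemLp Z 2 μ)
    (hσ : 0 < ProbabilityTheory.variance Z μ)
    (f : ℝ → ℝ) (hf : Measurable f) (C : ℝ) (hfb : ∀ x, |f x| ≤ C) :
    ∫ ω, (Z ω - ∫ ω', Z ω' ∂μ) * f (Z ω) ∂μ
      = ∫ z : ℝ,
          ((∫ ω in {ω | z ≤ Z ω}, f (Z ω) ∂μ) / (μ {ω | z ≤ Z ω}).toReal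
            - (∫ ω in {ω | Z ω < z}, f (Z ω) ∂μ) / (μ {ω | Z ω < z}).toReal)
          * (μ {ω | z ≤ Z ω}).toReal * (μ {ω | Z ω < z}).toReal := by
  have hZint : Integrable Z μ := hZ2.integrable (by norm_num)
  have hfZm : Measurable (fun ω => f (Z ω)) := hf.comp hZmeas
  have hfZint : Integrable (fun ω => f (Z ω)) μ :=
    (memLp_top_of_bound hfZm.aestronglyMeasurable C
      (Filter.Eventually.of_forall fun ω => by simpa [Real.norm_eq_abs] using hfb (Z ω))).integrable le_top
  set m := ∫ ω, Z ω ∂μ with hm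
  set T := ∫ ω, f (Z ω) ∂μ with hT
  set g : Ω → ℝ := fun ω => f (Z ω) - T with hg
  have hgmeas : Measurable g := hfZm.sub measurable_const
  have hgint : Integrable g μ := hfZint.sub (integrable_const T)
  have hgzero : ∫ ω, g ω ∂μ = 0 := by
    rw [hg]
    rw [integral_sub hfZint (integrable_const T)]
    simp [hT]
  set p : ℝ → ℝ := fun z => (μ {ω | z ≤ Z ω}).toReal with hp
  have hsmeas : ∀ z : ℝ, MeasurableSet {ω | z ≤ Z ω} := fun z =>
    measurableSet_le measurable_const hZmeas
  have hchiZ_eq : ∀ z : ℝ, (fun ω => chi (Z ω) z) = Set.indicator {ω | z ≤ Z ω} (fun _ => (1:ℝ)) := by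
    intro z; funext ω; simp [chi, Set.indicator_apply, Set.mem_setOf_eq]
  have hchiZ_int : ∀ z : ℝ, Integrable (fun ω => chi (Z ω) z) μ := fun z => by
    rw [hchiZ_eq z]; exact (integrable_const 1).indicator (hsmeas z)
  have hchiZ_integral : ∀ z : ℝ, ∫ ω, chi (Z ω) z ∂μ = p z := fun z => by
    rw [hchiZ_eq z, integral_indicator_const (1:ℝ) (hsmeas z)]; simp [hp, Measure.real]
  -- measurability of chi composed with Z on the product space
  have hchiZpair : Measurable (fun q : Ω × ℝ => chi (Z q.1) q.2) := by
    have : (fun q : Ω × ℝ => chi (Z q.1) q.2)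
        = fun q : Ω × ℝ => if q.2 ≤ Z q.1 then (1:ℝ) else 0 := rfl
    rw [this]
    exact Measurable.ite (measurableSet_le measurable_snd (hZmeas.comp measurable_fst))
      measurable_const measurable_const
  have hchia_meas : ∀ a : ℝ, Measurable (chi a) := by
    intro a
    have : chi a = fun z => if z ≤ a then (1:ℝ) else 0 := rfl
    rw [this]
    exact Measurable.ite (measurableSet_le measurable_id measurable_const)
      measurable_const measurable_const
  -- integrability of G a on the product measure
  have hGint : ∀ a : ℝ, Integrable (fun q : Ω × ℝ => chi a q.2 - chi (Z q.1) q.2) (μ.prod volume) := by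
    intro a
    have hGm : AEStronglyMeasurable (fun q : Ω × ℝ => chi a q.2 - chi (Z q.1) q.2) (μ.prod volume) :=
      (((hchia_meas a).comp measurable_snd).sub hchiZpair).aestronglyMeasurable
    rw [integrable_prod_iff hGm]
    constructor
    · exact Filter.Eventually.of_forall fun ω => chi_sub_integrable a (Z ω)
    · have e : (fun ω => ∫ z, ‖chi a z - chi (Z ω) z‖) = fun ω => |a - Z ω| := by
        funext ω
        simp only [Real.norm_eq_abs]
        exact integral_abs_chi_sub a (Z ω)
      rw [e]
      exact ((integrable_const a).sub hZint).abs
  -- inner integral over ω equals chi a z - p z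
  have hinner : ∀ a z : ℝ, ∫ ω, (chi a z - chi (Z ω) z) ∂μ = chi a z - p z := by
    intro a z
    rw [integral_sub (integrable_const _) (hchiZ_int z), hchiZ_integral z]
    simp
  have haux3 : ∀ a : ℝ, Integrable (fun z => chi a z - p z) := by
    intro a
    have h3 := (hGint a).integral_prod_right
    have e : (fun z => ∫ ω, (chi a z - chi (Z ω) z) ∂μ) = fun z => chi a z - p z := by
      funext z; exact hinner a z
    rwa [e] at h3
  have haux2 : ∀ a : ℝ, ∫ z, (chi a z - p z) = a - m := by
    intro a
    have hswap := integral_integral_swap (f := fun ω z => chi a z - chi (Z ω) z) (hGint a)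
    calc ∫ z, (chi a z - p z) = ∫ z, ∫ ω, (chi a z - chi (Z ω) z) ∂μ := by
          refine integral_congr_ae (Filter.Eventually.of_forall fun z => ?_)
          exact (hinner a z).symm
      _ = ∫ ω, (∫ z, (chi a z - chi (Z ω) z)) ∂μ := hswap.symm
      _ = ∫ ω, (a - Z ω) ∂μ := by
          refine integral_congr_ae (Filter.Eventually.of_forall fun ω => ?_)
          exact integral_chi_sub a (Z ω)
      _ = a - m := by rw [integral_sub (integrable_const a) hZint]; simp [hm]
  have haux4 : ∀ a : ℝ, ∫ z, |chi a z - p z| ≤ |a| + ∫ ω, |Z ω| ∂μ := by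
    intro a
    have habs : Integrable (fun q : Ω × ℝ => |chi a q.2 - chi (Z q.1) q.2|) (μ.prod volume) :=
      (hGint a).abs
    have h1 : ∀ z : ℝ, |chi a z - p z| ≤ ∫ ω, |chi a z - chi (Z ω) z| ∂μ := by
      intro z
      rw [← hinner a z]
      simpa [Real.norm_eq_abs] using
        norm_integral_le_integral_norm (fun ω => chi a z - chi (Z ω) z) (μ := μ)
    have h2 : Integrable (fun z => ∫ ω, |chi a z - chi (Z ω) z| ∂μ) := habs.integral_prod_right
    have h3 : ∫ z, |chi a z - p z| ≤ ∫ z, ∫ ω, |chi a z - chi (Z ω) z| ∂μ :=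
      integral_mono (haux3 a).abs h2 h1
    have h4 : ∫ z, ∫ ω, |chi a z - chi (Z ω) z| ∂μ = ∫ ω, (∫ z, |chi a z - chi (Z ω) z|) ∂μ :=
      (integral_integral_swap (f := fun ω z => |chi a z - chi (Z ω) z|) habs).symm
    have h5 : ∫ ω, (∫ z, |chi a z - chi (Z ω) z|) ∂μ = ∫ ω, |a - Z ω| ∂μ := by
      refine integral_congr_ae (Filter.Eventually.of_forall fun ω => ?_)
      exact integral_abs_chi_sub a (Z ω)
    have h6 : ∫ ω, |a - Z ω| ∂μ ≤ ∫ ω, (|a| + |Z ω|) ∂μ := by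
      refine integral_mono ((integrable_const a).sub hZint).abs
        ((integrable_const |a|).add hZint.abs) fun ω => ?_
      calc |a - Z ω| = |a + -(Z ω)| := by ring_nf
        _ ≤ |a| + |(-(Z ω))| := abs_add_le a (-(Z ω))
        _ = |a| + |Z ω| := by rw [abs_neg]
    have h7 : ∫ ω, (|a| + |Z ω|) ∂μ = |a| + ∫ ω, |Z ω| ∂μ := by
      rw [integral_add (integrable_const _) hZint.abs]; simp
    linarith [h3, h4 ▸ h3]
  -- measurability of p
  have hpmono : Antitone p := by
    intro z1 z2 h
    exact ENNReal.toReal_mono (measure_ne_top μ _)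
      (measure_mono fun ω hω => le_trans h hω)
  have hpmeas : Measurable p := hpmono.measurable
  -- bound on g
  set Cg : ℝ := C + |T| with hCg
  have hgbdd : ∀ ω, |g ω| ≤ Cg := by
    intro ω
    calc |g ω| = |f (Z ω) - T| := rfl
      _ ≤ |f (Z ω)| + |T| := abs_sub (f (Z ω)) T
      _ ≤ C + |T| := by linarith [hfb (Z ω)]
  have hCgnn : 0 ≤ Cg := by
    have : (0:ℝ) ≤ C := le_trans (abs_nonneg _) (hfb 0)
    rw [hCg]; positivity
  -- main Fubini integrand
  set F : Ω × ℝ → ℝ := fun q => (chi (Z q.1) q.2 - p q.2) * g q.1 with hF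
  have hFmeas : AEStronglyMeasurable F (μ.prod volume) :=
    ((hchiZpair.sub (hpmeas.comp measurable_snd)).mul
      (hgmeas.comp measurable_fst)).aestronglyMeasurable
  set I : ℝ := ∫ ω, |Z ω| ∂μ with hI
  have hFint : Integrable F (μ.prod volume) := by
    rw [integrable_prod_iff hFmeas]
    constructor
    · exact Filter.Eventually.of_forall fun ω => (haux3 (Z ω)).mul_const (g ω)
    · refine Integrable.mono' (g := fun ω => (|Z ω| + I) * Cg)
        ((hZint.abs.add (integrable_const I)).mul_const Cg)
        (hFmeas.norm.integral_prod_right') (Filter.Eventually.of_forall fun ω => ?_)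
      have hnn : 0 ≤ ∫ z, ‖F (ω, z)‖ := integral_nonneg fun z => norm_nonneg _
      rw [Real.norm_eq_abs, abs_of_nonneg hnn]
      have e : (fun z => ‖F (ω, z)‖) = fun z => |chi (Z ω) z - p z| * |g ω| := by
        funext z; rw [hF]; simp [Real.norm_eq_abs, abs_mul]
      rw [e, integral_mul_const]
      have h1 : ∫ z, |chi (Z ω) z - p z| ≤ |Z ω| + I := haux4 (Z ω)
      have h2 : 0 ≤ ∫ z, |chi (Z ω) z - p z| := integral_nonneg fun z => abs_nonneg _
      exact mul_le_mul h1 (hgbdd ω) (abs_nonneg _) (by linarith [abs_nonneg (Z ω), hI ▸ (integral_nonneg (fun ω' => abs_nonneg (Z ω')) : (0:ℝ) ≤ I)])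
  -- pointwise identities for the RHS integrand
  have hcompl : ∀ z : ℝ, {ω | Z ω < z} = {ω | z ≤ Z ω}ᶜ := by
    intro z; ext ω; simp [not_le]
  have hchig_eq : ∀ z : ℝ, (fun ω => chi (Z ω) z * g ω) = Set.indicator {ω | z ≤ Z ω} g := by
    intro z; funext ω; simp [chi, Set.indicator_apply, Set.mem_setOf_eq, ite_mul]
  have hchig_int : ∀ z : ℝ, Integrable (fun ω => chi (Z ω) z * g ω) μ := fun z => by
    rw [hchig_eq z]; exact hgint.indicator (hsmeas z)
  have hchig_integral : ∀ z : ℝ, ∫ ω, chi (Z ω) z * g ω ∂μ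
      = (∫ ω in {ω | z ≤ Z ω}, f (Z ω) ∂μ) - T * p z := by
    intro z
    rw [hchig_eq z, integral_indicator (hsmeas z), hg]
    rw [integral_sub hfZint.integrableOn (integrableOn_const (measure_ne_top μ _))]
    rw [setIntegral_const]
    simp [hp, smul_eq_mul, mul_comm, Measure.real]
  have stepA : ∀ z : ℝ,
      ((∫ ω in {ω | z ≤ Z ω}, f (Z ω) ∂μ) / (μ {ω | z ≤ Z ω}).toReal
        - (∫ ω in {ω | Z ω < z}, f (Z ω) ∂μ) / (μ {ω | Z ω < z}).toReal)
        * (μ {ω | z ≤ Z ω}).toReal * (μ {ω | Z ω < z}).toReal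
      = ∫ ω, chi (Z ω) z * g ω ∂μ := by
    intro z
    rw [hchig_integral z]
    have hpz : p z = (μ {ω | z ≤ Z ω}).toReal := rfl
    rw [hpz]
    set A := ∫ ω in {ω | z ≤ Z ω}, f (Z ω) ∂μ with hA
    set B := ∫ ω in {ω | Z ω < z}, f (Z ω) ∂μ with hB
    set pz := (μ {ω | z ≤ Z ω}).toReal with hpzd
    set qz := (μ {ω | Z ω < z}).toReal with hqzd
    have hpq1 : pz + qz = 1 := by
      have h1 : μ {ω | z ≤ Z ω} + μ {ω | Z ω < z} = 1 := by
        rw [hcompl z, measure_add_measure_compl (hsmeas z), measure_univ]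
      have h2 := congrArg ENNReal.toReal h1
      rwa [ENNReal.toReal_add (measure_ne_top μ _) (measure_ne_top μ _), ENNReal.toReal_one] at h2
    have hABT : A + B = T := by
      rw [hA, hB, hcompl z, hT]
      exact integral_add_compl (hsmeas z) hfZint
    by_cases hp0 : pz = 0
    · have hA0 : A = 0 := by
        have h0 : μ {ω | z ≤ Z ω} = 0 := by
          rcases (ENNReal.toReal_eq_zero_iff _).1 hp0 with h | h
          · exact h
          · exact absurd h (measure_ne_top μ _)
        rw [hA, Measure.restrict_eq_zero.2 h0, integral_zero_measure]
      simp [hp0, hA0]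
    · by_cases hq0 : qz = 0
      · have hB0 : B = 0 := by
          have h0 : μ {ω | Z ω < z} = 0 := by
            rcases (ENNReal.toReal_eq_zero_iff _).1 hq0 with h | h
            · exact h
            · exact absurd h (measure_ne_top μ _)
          rw [hB, Measure.restrict_eq_zero.2 h0, integral_zero_measure]
        have hp1 : pz = 1 := by linarith
        have hTA : T = A := by rw [← hABT, hB0]; ring
        rw [hq0, hB0, hp1, hTA]; simp
      · have hq : qz = 1 - pz := by linarith
        have hB' : B = T - A := by linarith
        have e1 : (A / pz - B / qz) * pz * qz = (A / pz * pz) * qz - (B / qz * qz) * pz := by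
          ring
        rw [e1, div_mul_cancel₀ A hp0, div_mul_cancel₀ B hq0, hB', hq]
        ring
  -- step B: replace f(Z) by g
  have hZm_int : Integrable (fun ω => Z ω - m) μ := hZint.sub (integrable_const m)
  have hmul_int : Integrable (fun ω => (Z ω - m) * f (Z ω)) μ := by
    have h := Integrable.bdd_mul (hZint.sub (integrable_const m)) hfZm.aestronglyMeasurable
      (c := C) (Filter.Eventually.of_forall fun x => by simpa [Real.norm_eq_abs] using hfb (Z x))
    simpa [mul_comm] using h
  have hzero : ∫ ω, (Z ω - m) ∂μ = 0 := by
    rw [integral_sub hZint (integrable_const m)]; simp [hm]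
  have stepB : ∫ ω, (Z ω - m) * f (Z ω) ∂μ = ∫ ω, (Z ω - m) * g ω ∂μ := by
    have e : (fun ω => (Z ω - m) * g ω) = fun ω => (Z ω - m) * f (Z ω) - (Z ω - m) * T := by
      funext ω; rw [hg]; ring
    rw [e, integral_sub hmul_int (hZm_int.mul_const T), integral_mul_const, hzero]
    ring
  have hCpt : ∀ ω, (Z ω - m) * g ω = ∫ z, F (ω, z) := by
    intro ω
    have e : (fun z => F (ω, z)) = fun z => (chi (Z ω) z - p z) * g ω := rfl
    rw [e, integral_mul_const, haux2 (Z ω)]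
  have main : ∫ ω, (Z ω - m) * f (Z ω) ∂μ
      = ∫ z, (∫ ω, chi (Z ω) z * g ω ∂μ) := by
    calc ∫ ω, (Z ω - m) * f (Z ω) ∂μ
        = ∫ ω, (Z ω - m) * g ω ∂μ := stepB
      _ = ∫ ω, (∫ z, F (ω, z)) ∂μ :=
          integral_congr_ae (Filter.Eventually.of_forall hCpt)
      _ = ∫ z, (∫ ω, F (ω, z) ∂μ) :=
          integral_integral_swap (f := fun ω z => F (ω, z)) hFint
      _ = ∫ z, (∫ ω, chi (Z ω) z * g ω ∂μ) := by
          refine integral_congr_ae (Filter.Eventually.of_forall fun z => ?_)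
          show ∫ ω, F (ω, z) ∂μ = ∫ ω, chi (Z ω) z * g ω ∂μ
          have e : (fun ω => F (ω, z)) = fun ω => chi (Z ω) z * g ω - p z * g ω := by
            funext ω; rw [hF]; ring
          rw [e, integral_sub (hchig_int z) (hgint.const_mul _), integral_const_mul, hgzero]
          ring
  have final : ∫ ω, (Z ω - m) * f (Z ω) ∂μ
      = ∫ z : ℝ,
          ((∫ ω in {ω | z ≤ Z ω}, f (Z ω) ∂μ) / (μ {ω | z ≤ Z ω}).toReal
            - (∫ ω in {ω | Z ω < z}, f (Z ω) ∂μ) / (μ {ω | Z ω < z}).toReal)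
          * (μ {ω | z ≤ Z ω}).toReal * (μ {ω | Z ω < z}).toReal := by
    rw [main]
    refine integral_congr_ae (Filter.Eventually.of_forall fun z => ?_)
    exact (stepA z).symm
  exact final
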